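/- arXiv:2403.12804 — 3 statements merged into one kernel-verified Lean document; each statement's English description precedes it below -/
import Mathlib

section
/- Perron–Frobenius property in L²: let (Q, μ) be a measure space and A a bounded operator on L²(Q,μ) with strictly positive kernel, i.e. for every nonnegative F ∈ L² with F ≠ 0 one has AF > 0 almost surely. If λ = ‖A‖ is an eigenvalue of A and A is self-adjoint, then λ is a simple eigenvalue and the corresponding eigenvector can be chosen strictly positive almost surely. -/
open MeasureTheory
open scoped RealInnerProductSpace

set_option maxHeartbeats 1000000 in
/-- Perron–Frobenius property in `L²`: let `(Q, μ)` be a σ-finite measure space and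
`A` a bounded self-adjoint operator on `L²(Q,μ)` with strictly positive kernel
(positivity improving): for every nonnegative `F ≠ 0` one has `AF > 0` almost
everywhere.  If `λ = ‖A‖` is an eigenvalue of `A`, then it is simple and the
corresponding eigenvector can be chosen strictly positive almost everywhere. -/
theorem stmt8 {Q : Type*} [MeasurableSpace Q] (μ : Measure Q) [SigmaFinite μ]
    (A : Lp ℝ 2 μ →L[ℝ] Lp ℝ 2 μ)
    (hsa : ∀ f g : Lp ℝ 2 μ, ⟪A f, g⟫ = ⟪f, A g⟫)
    (hposimp : ∀ F : Lp ℝ 2 μ, (∀ᵐ q ∂μ, 0 ≤ F q) → F ≠ 0 → ∀ᵐ q ∂μ, 0 < (A F) q)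
    (heig : ∃ F : Lp ℝ 2 μ, F ≠ 0 ∧ A F = ‖A‖ • F) :
    ∃ Om : Lp ℝ 2 μ, Om ≠ 0 ∧ A Om = ‖A‖ • Om ∧ (∀ᵐ q ∂μ, 0 < Om q) ∧
      ∀ F : Lp ℝ 2 μ, A F = ‖A‖ • F → ∃ c : ℝ, F = c • Om := by
  obtain ⟨F0, hF0ne, hF0eig⟩ := heig
  set lam := ‖A‖ with hlamdef
  -- the measure is nonzero
  have hμ : μ ≠ 0 := by
    rintro rfl
    exact hF0ne (Lp.ext (by simp [Filter.EventuallyEq]))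
  have hnotfalse : ¬ (∀ᵐ _q ∂μ, False) := by
    simpa [ae_iff, Measure.measure_univ_eq_zero] using hμ
  -- nonnegativity of |F| as an Lp element, a.e.
  have habs_nonneg : ∀ F : Lp ℝ 2 μ, ∀ᵐ q ∂μ, 0 ≤ (|F| : Lp ℝ 2 μ) q := by
    intro F
    filter_upwards [Lp.coeFn_abs F] with q hq
    rw [hq]; exact abs_nonneg _
  have habs_ne : ∀ F : Lp ℝ 2 μ, F ≠ 0 → (|F| : Lp ℝ 2 μ) ≠ 0 := by
    intro F hF h
    apply hF
    rw [← norm_eq_zero, ← norm_abs_eq_norm, norm_eq_zero]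
    exact h
  -- A preserves nonnegativity
  have hpos : ∀ F : Lp ℝ 2 μ, (∀ᵐ q ∂μ, 0 ≤ F q) → ∀ᵐ q ∂μ, 0 ≤ (A F) q := by
    intro F hF
    by_cases h : F = 0
    · subst h
      rw [map_zero]
      filter_upwards [Lp.coeFn_zero ℝ 2 μ] with q hq
      exact hq.ge
    · exact (hposimp F hF h).mono fun q h => h.le
  -- |A F| ≤ A |F| a.e.
  have habs : ∀ F : Lp ℝ 2 μ, ∀ᵐ q ∂μ, |(A F) q| ≤ (A |F|) q := by
    intro F
    have e1 : (A (|F| - F) : Lp ℝ 2 μ) =ᵐ[μ] fun q => (A |F|) q - (A F) q := by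
      rw [map_sub]; exact Lp.coeFn_sub _ _
    have e2 : (A (|F| + F) : Lp ℝ 2 μ) =ᵐ[μ] fun q => (A |F|) q + (A F) q := by
      rw [map_add]; exact Lp.coeFn_add _ _
    have h1 : ∀ᵐ q ∂μ, 0 ≤ (A (|F| - F)) q := by
      apply hpos
      filter_upwards [Lp.coeFn_sub (|F| : Lp ℝ 2 μ) F, Lp.coeFn_abs F] with q hq ha
      rw [hq, Pi.sub_apply, ha]
      exact sub_nonneg.2 (le_abs_self _)
    have h2 : ∀ᵐ q ∂μ, 0 ≤ (A (|F| + F)) q := by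
      apply hpos
      filter_upwards [Lp.coeFn_add (|F| : Lp ℝ 2 μ) F, Lp.coeFn_abs F] with q hq ha
      rw [hq, Pi.add_apply, ha]
      have := neg_abs_le (F q); linarith
    filter_upwards [h1, h2, e1, e2] with q h1 h2 e1 e2
    have h1' : 0 ≤ (A |F|) q - (A F) q := h1.trans_eq e1
    have h2' : 0 ≤ (A |F|) q + (A F) q := h2.trans_eq e2
    exact abs_le.2 ⟨by linarith, by linarith⟩
  -- strict positivity of A |F0|
  have hAabsF0 : ∀ᵐ q ∂μ, 0 < (A |F0|) q := hposimp _ (habs_nonneg F0) (habs_ne F0 hF0ne)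
  -- the norm is positive
  have hlam : 0 < lam := by
    rcases (norm_nonneg A).lt_or_eq with h | h
    · exact h
    · exfalso
      have hA0 : A (|F0| : Lp ℝ 2 μ) = 0 := by
        have hle := A.le_opNorm (|F0| : Lp ℝ 2 μ)
        rw [← h, zero_mul] at hle
        exact norm_le_zero_iff.1 hle
      apply hnotfalse
      filter_upwards [hAabsF0, Lp.coeFn_zero ℝ 2 μ] with q h1 h2
      rw [hA0, h2] at h1
      exact lt_irrefl 0 h1
  -- positivity of integrals of a.e.-positive functions
  have intpos : ∀ f : Q → ℝ, Integrable f μ → (∀ᵐ q ∂μ, 0 < f q) → 0 < ∫ q, f q ∂μ := by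
    intro f hint hf
    rw [integral_pos_iff_support_of_nonneg_ae (hf.mono fun q h => h.le) hint, pos_iff_ne_zero]
    intro h0
    apply hnotfalse
    filter_upwards [hf, measure_eq_zero_iff_ae_notMem.1 h0] with q h1 h2
    rw [Function.notMem_support.1 h2] at h1
    exact lt_irrefl 0 h1
  -- key step: if G is an eigenvector for lam, so is |G|
  have key : ∀ G : Lp ℝ 2 μ, A G = lam • G → A |G| = lam • (|G| : Lp ℝ 2 μ) := by
    intro G hG
    have hnormg : ‖(|G| : Lp ℝ 2 μ)‖ = ‖G‖ := norm_abs_eq_norm G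
    have i1 : ⟪A G, G⟫ = lam * ‖G‖ ^ 2 := by
      rw [hG, real_inner_smul_left, real_inner_self_eq_norm_sq]
    have hint1 : Integrable (fun q => (A G) q * G q) μ := by
      simpa only [Real.inner_apply] using L2.integrable_inner (𝕜 := ℝ) (A G) G
    have hint2 : Integrable (fun q => (A |G|) q * (|G| : Lp ℝ 2 μ) q) μ :=
      by simpa only [Real.inner_apply] using
        L2.integrable_inner (𝕜 := ℝ) (A (|G| : Lp ℝ 2 μ)) (|G| : Lp ℝ 2 μ)
    have i2 : ⟪A G, G⟫ ≤ ⟪A |G|, (|G| : Lp ℝ 2 μ)⟫ := by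
      rw [L2.inner_def, L2.inner_def]
      simp only [Real.inner_apply]
      apply integral_mono_ae hint1 hint2
      filter_upwards [habs G, Lp.coeFn_abs G] with q h1 h2
      calc (A G) q * G q ≤ |(A G) q * G q| := le_abs_self _
        _ = |(A G) q| * |G q| := abs_mul _ _
        _ ≤ (A |G|) q * (|G| : Lp ℝ 2 μ) q := by
            rw [h2]; exact mul_le_mul_of_nonneg_right h1 (abs_nonneg _)
    have i3 : ⟪A |G|, (|G| : Lp ℝ 2 μ)⟫ ≤ lam * ‖G‖ ^ 2 := by
      calc ⟪A |G|, (|G| : Lp ℝ 2 μ)⟫ ≤ ‖A (|G| : Lp ℝ 2 μ)‖ * ‖(|G| : Lp ℝ 2 μ)‖ :=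
            real_inner_le_norm _ _
        _ ≤ (lam * ‖(|G| : Lp ℝ 2 μ)‖) * ‖(|G| : Lp ℝ 2 μ)‖ :=
            mul_le_mul_of_nonneg_right (A.le_opNorm _) (norm_nonneg _)
        _ = lam * ‖G‖ ^ 2 := by rw [hnormg]; ring
    have ieq : ⟪A |G|, (|G| : Lp ℝ 2 μ)⟫ = lam * ‖G‖ ^ 2 := le_antisymm i3 (i1 ▸ i2)
    have hAg : ‖A (|G| : Lp ℝ 2 μ)‖ ≤ lam * ‖G‖ := by
      have hle := A.le_opNorm (|G| : Lp ℝ 2 μ)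
      rwa [hnormg] at hle
    have hsq : ‖A (|G| : Lp ℝ 2 μ) - lam • (|G| : Lp ℝ 2 μ)‖ ^ 2 ≤ 0 := by
      rw [norm_sub_sq_real, real_inner_smul_right, ieq, norm_smul, Real.norm_eq_abs,
        abs_of_pos hlam, hnormg]
      nlinarith [norm_nonneg (A (|G| : Lp ℝ 2 μ)), norm_nonneg G, hlam.le]
    have h0 : ‖A (|G| : Lp ℝ 2 μ) - lam • (|G| : Lp ℝ 2 μ)‖ = 0 := by
      nlinarith [norm_nonneg (A (|G| : Lp ℝ 2 μ) - lam • (|G| : Lp ℝ 2 μ))]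
    exact sub_eq_zero.1 (norm_eq_zero.1 h0)
  -- sign dichotomy for eigenvectors
  have sign : ∀ G : Lp ℝ 2 μ, A G = lam • G → G ≠ 0 →
      (∀ᵐ q ∂μ, 0 < (|G| : Lp ℝ 2 μ) q) ∧ (G = |G| ∨ G = -(|G| : Lp ℝ 2 μ)) := by
    intro G hG hGne
    have hGabs := key G hG
    have hApos : ∀ᵐ q ∂μ, 0 < (A |G|) q := hposimp _ (habs_nonneg G) (habs_ne G hGne)
    rw [hGabs] at hApos
    have habspos : ∀ᵐ q ∂μ, 0 < (|G| : Lp ℝ 2 μ) q := by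
      filter_upwards [hApos, Lp.coeFn_smul lam (|G| : Lp ℝ 2 μ)] with q h1 h2
      rw [h2] at h1
      have h3 : 0 < lam * (|G| : Lp ℝ 2 μ) q := h1
      nlinarith
    refine ⟨habspos, ?_⟩
    by_cases hP : (|G| : Lp ℝ 2 μ) - G = 0
    · exact Or.inl (sub_eq_zero.1 hP).symm
    by_cases hN : (|G| : Lp ℝ 2 μ) + G = 0
    · exact Or.inr (neg_eq_of_add_eq_zero_right hN).symm
    exfalso
    have hPe : A ((|G| : Lp ℝ 2 μ) - G) = lam • ((|G| : Lp ℝ 2 μ) - G) := by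
      rw [map_sub, hG, hGabs, smul_sub]
    have hNe : A ((|G| : Lp ℝ 2 μ) + G) = lam • ((|G| : Lp ℝ 2 μ) + G) := by
      rw [map_add, hG, hGabs, smul_add]
    have hPnn : ∀ᵐ q ∂μ, 0 ≤ ((|G| : Lp ℝ 2 μ) - G) q := by
      filter_upwards [Lp.coeFn_sub (|G| : Lp ℝ 2 μ) G, Lp.coeFn_abs G] with q h1 h2
      rw [h1, Pi.sub_apply, h2]
      exact sub_nonneg.2 (le_abs_self _)
    have hNnn : ∀ᵐ q ∂μ, 0 ≤ ((|G| : Lp ℝ 2 μ) + G) q := by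
      filter_upwards [Lp.coeFn_add (|G| : Lp ℝ 2 μ) G, Lp.coeFn_abs G] with q h1 h2
      rw [h1, Pi.add_apply, h2]
      have := neg_abs_le (G q); linarith
    have hPpos := hposimp _ hPnn hP
    rw [hPe] at hPpos
    have hNpos := hposimp _ hNnn hN
    rw [hNe] at hNpos
    have hGneg : ∀ᵐ q ∂μ, G q < 0 := by
      filter_upwards [hPpos, Lp.coeFn_smul lam ((|G| : Lp ℝ 2 μ) - G),
        Lp.coeFn_sub (|G| : Lp ℝ 2 μ) G, Lp.coeFn_abs G] with q h1 h2 h3 h4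
      rw [h2] at h1
      have h5 : 0 < lam * ((|G| : Lp ℝ 2 μ) - G) q := h1
      have h6 : 0 < ((|G| : Lp ℝ 2 μ) - G) q := by nlinarith
      rw [h3, Pi.sub_apply, h4] at h6
      rcases lt_or_ge (G q) 0 with h | h
      · exact h
      · rw [abs_of_nonneg h] at h6; linarith
    have hGpos : ∀ᵐ q ∂μ, 0 < G q := by
      filter_upwards [hNpos, Lp.coeFn_smul lam ((|G| : Lp ℝ 2 μ) + G),
        Lp.coeFn_add (|G| : Lp ℝ 2 μ) G, Lp.coeFn_abs G] with q h1 h2 h3 h4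
      rw [h2] at h1
      have h5 : 0 < lam * ((|G| : Lp ℝ 2 μ) + G) q := h1
      have h6 : 0 < ((|G| : Lp ℝ 2 μ) + G) q := by nlinarith
      rw [h3, Pi.add_apply, h4] at h6
      rcases lt_or_ge 0 (G q) with h | h
      · exact h
      · rw [abs_of_nonpos h] at h6; linarith
    exact hnotfalse (by
      filter_upwards [hGneg, hGpos] with q h1 h2
      exact absurd h2 (not_lt.2 h1.le))
  -- the positive eigenvector
  set Om := (|F0| : Lp ℝ 2 μ) with hOm
  have hOmne : Om ≠ 0 := habs_ne F0 hF0ne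
  have hOmeig : A Om = lam • Om := key F0 hF0eig
  have hOmpos : ∀ᵐ q ∂μ, 0 < Om q := (sign F0 hF0eig hF0ne).1
  refine ⟨Om, hOmne, hOmeig, hOmpos, ?_⟩
  intro G hG
  by_cases hG0 : G = 0
  · exact ⟨0, by simp [hG0]⟩
  set c := ⟪G, Om⟫ / ‖Om‖ ^ 2 with hc
  refine ⟨c, ?_⟩
  set H := G - c • Om with hHdef
  have hHeig : A H = lam • H := by
    rw [hHdef, map_sub, ContinuousLinearMap.map_smul, hG, hOmeig, smul_sub, smul_comm]
  have hinner : ⟪H, Om⟫ = 0 := by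
    have hOmnorm : ‖Om‖ ≠ 0 := norm_ne_zero_iff.2 hOmne
    rw [hHdef, inner_sub_left, real_inner_smul_left, real_inner_self_eq_norm_sq, hc]
    field_simp
    ring
  by_contra hne
  have hHne : H ≠ 0 := by rw [hHdef, sub_ne_zero]; exact hne
  obtain ⟨hHabspos, hsgn⟩ := sign H hHeig hHne
  have hint : Integrable (fun q => H q * Om q) μ := by
    simpa only [Real.inner_apply] using L2.integrable_inner (𝕜 := ℝ) H Om
  have hnz : ⟪H, Om⟫ ≠ 0 := by
    rw [L2.inner_def]
    simp only [Real.inner_apply]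
    rcases hsgn with h | h
    · have hpos : 0 < ∫ q, H q * Om q ∂μ := by
        apply intpos _ hint
        filter_upwards [hHabspos, hOmpos] with q h1 h2
        rw [h]
        exact mul_pos h1 h2
      exact ne_of_gt hpos
    · have hneg : 0 < ∫ q, -(H q * Om q) ∂μ := by
        apply intpos _ hint.neg
        filter_upwards [hHabspos, hOmpos, Lp.coeFn_neg (|H| : Lp ℝ 2 μ)] with q h1 h2 h3
        have h4 : H q = -((|H| : Lp ℝ 2 μ) q) := by
          conv_lhs => rw [h]
          exact h3
        simp only [Pi.neg_apply]
        rw [h4]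
        have := mul_pos h1 h2
        nlinarith
      rw [integral_neg] at hneg
      have hlt : (∫ q, H q * Om q ∂μ) < 0 := by linarith
      exact ne_of_lt hlt
  exact hnz hinner
end

section
/- For a trace class operator A on a Hilbert space H, each exterior power Λᵏ A is trace class on Λᵏ H with ‖Λᵏ A‖_{tr} ≤ ‖A‖_{tr}^k / k!, and consequently z ↦ Σ_{k=0}^∞ z^k tr(Λᵏ A) defines an entire function bounded by |det_Fr(1+zA)| ≤ exp(|z|·‖A‖_{tr}). -/
open scoped RealInnerProductSpace

/-- The set of finite sums `Σᵢ |⟨fᵢ, T gᵢ⟩|` over pairs of orthonormal families,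
whose supremum is the trace norm of `T`. -/
def traceSet {H : Type*} [NormedAddCommGroup H] [InnerProductSpace ℝ H]
    (T : H →L[ℝ] H) : Set ℝ :=
  {r | ∃ (n : ℕ) (f g : Fin n → H), Orthonormal ℝ f ∧ Orthonormal ℝ g ∧
    r = ∑ i : Fin n, |⟪f i, T (g i)⟫|}

/-- `T` is trace class iff the sums `Σᵢ |⟨fᵢ, T gᵢ⟩|` over orthonormal families are
uniformly bounded. -/
def IsTraceClass {H : Type*} [NormedAddCommGroup H] [InnerProductSpace ℝ H]
    (T : H →L[ℝ] H) : Prop :=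
  BddAbove (traceSet T)

/-- The trace norm `‖T‖_tr`. -/
noncomputable def traceNorm {H : Type*} [NormedAddCommGroup H] [InnerProductSpace ℝ H]
    (T : H →L[ℝ] H) : ℝ :=
  sSup (traceSet T)

/-- `tr_{ΛᵏH}(ΛᵏT)`, expressed along a Hilbert basis `e` by the Gram-determinant
formula `(1/k!) Σ_{i₁,…,i_k} det [⟨e_{i_a}, T e_{i_b}⟩]_{a,b}`. -/
noncomputable def trLambda {ι H : Type*} [NormedAddCommGroup H] [InnerProductSpace ℝ H]
    [CompleteSpace H] (e : HilbertBasis ι ℝ H) (T : H →L[ℝ] H) (k : ℕ) : ℝ :=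
  ((k.factorial : ℝ))⁻¹ *
    ∑' i : Fin k → ι, Matrix.det (Matrix.of fun a b : Fin k => ⟪e (i a), T (e (i b))⟫)

/- ### Auxiliary lemmas -/

section Aux

open Matrix

lemma aux_det_mul_expand {k n : ℕ} (B : Matrix (Fin k) (Fin n) ℝ) (C : Matrix (Fin n) (Fin k) ℝ) :
    (B * C).det = ∑ t : Fin k → Fin n, (∏ r, B r (t r)) * (C.submatrix t id).det := by
  have h1 : (B * C).det
      = Matrix.detRowAlternating (R := ℝ) (fun r : Fin k => ∑ j, B r j • (C j : Fin k → ℝ)) := by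
    congr 1; ext r b; simp [Matrix.mul_apply]
  have h2 := (Matrix.detRowAlternating (R := ℝ) (n := Fin k)).toMultilinearMap.map_sum
    (fun (i : Fin k) (j : Fin n) => B i j • (C j : Fin k → ℝ))
  simp only [AlternatingMap.coe_multilinearMap] at h2
  rw [h1, h2]
  refine Finset.sum_congr rfl fun t _ => ?_
  have h3 := (Matrix.detRowAlternating (R := ℝ) (n := Fin k)).toMultilinearMap.map_smul_univ
    (fun i => B i (t i)) (fun i => (C (t i) : Fin k → ℝ))
  simp only [AlternatingMap.coe_multilinearMap] at h3
  rw [h3, smul_eq_mul]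
  congr 1

lemma aux_cb {k n : ℕ} (B : Matrix (Fin k) (Fin n) ℝ) (C : Matrix (Fin n) (Fin k) ℝ) :
    (k.factorial : ℝ) * (B * C).det
      = ∑ t : Fin k → Fin n, (B.submatrix id t).det * (C.submatrix t id).det := by
  have key : ∀ σ : Equiv.Perm (Fin k),
      ∑ t : Fin k → Fin n, (∏ r, B (σ r) (t r)) * (C.submatrix t id).det
        = (((Equiv.Perm.sign σ : ℤ) : ℝ)) * (B * C).det := by
    intro σ
    have reidx := Fintype.sum_equiv (Equiv.arrowCongr σ.symm (Equiv.refl (Fin n)))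
      (fun t : Fin k → Fin n => (∏ r, B (σ r) (t (σ r))) * (C.submatrix (t ∘ σ) id).det)
      (fun t : Fin k → Fin n => (∏ r, B (σ r) (t r)) * (C.submatrix t id).det)
      (by
        intro t
        simp only [Equiv.arrowCongr_apply, Equiv.refl_symm, Equiv.coe_refl, Equiv.symm_symm]
        congr 1)
    rw [← reidx]
    have hdetp : ∀ t : Fin k → Fin n,
        (C.submatrix (t ∘ σ) id).det = ((Equiv.Perm.sign σ : ℤ) : ℝ) * (C.submatrix t id).det := by
      intro t
      have hperm := Matrix.det_permute σ (C.submatrix t id)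
      have h4 : (C.submatrix t id).submatrix (⇑σ) id = C.submatrix (t ∘ ⇑σ) id := by
        rw [Matrix.submatrix_submatrix]; rfl
      rw [h4] at hperm
      rw [hperm]
    calc ∑ t : Fin k → Fin n, (∏ r, B (σ r) (t (σ r))) * (C.submatrix (t ∘ σ) id).det
        = ∑ t : Fin k → Fin n, ((Equiv.Perm.sign σ : ℤ) : ℝ)
            * ((∏ r, B r (t r)) * (C.submatrix t id).det) := by
          refine Finset.sum_congr rfl fun t _ => ?_
          rw [hdetp t, Equiv.prod_comp σ (fun r => B r (t r))]
          ring
      _ = ((Equiv.Perm.sign σ : ℤ) : ℝ) * (B * C).det := by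
          rw [← Finset.mul_sum, ← aux_det_mul_expand]
  symm
  calc ∑ t : Fin k → Fin n, (B.submatrix id t).det * (C.submatrix t id).det
      = ∑ t : Fin k → Fin n, (∑ σ : Equiv.Perm (Fin k),
          ((Equiv.Perm.sign σ : ℤ) : ℝ) * ∏ r, B (σ r) (t r)) * (C.submatrix t id).det := by
        refine Finset.sum_congr rfl fun t _ => ?_
        rw [Matrix.det_apply]
        congr 1
        refine Finset.sum_congr rfl fun σ _ => ?_
        rw [Units.smul_def, zsmul_eq_mul]
        rfl
    _ = ∑ σ : Equiv.Perm (Fin k), ((Equiv.Perm.sign σ : ℤ) : ℝ) *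
          ∑ t : Fin k → Fin n, (∏ r, B (σ r) (t r)) * (C.submatrix t id).det := by
        simp_rw [Finset.sum_mul]
        rw [Finset.sum_comm]
        simp_rw [Finset.mul_sum]
        exact Finset.sum_congr rfl fun σ _ => Finset.sum_congr rfl fun t _ => by ring
    _ = ∑ σ : Equiv.Perm (Fin k), ((Equiv.Perm.sign σ : ℤ) : ℝ) *
          (((Equiv.Perm.sign σ : ℤ) : ℝ) * (B * C).det) :=
        Finset.sum_congr rfl fun σ _ => by rw [key σ]
    _ = (k.factorial : ℝ) * (B * C).det := by
        have hsq : ∀ σ : Equiv.Perm (Fin k),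
            ((Equiv.Perm.sign σ : ℤ) : ℝ) * (((Equiv.Perm.sign σ : ℤ) : ℝ) * (B * C).det)
              = (B * C).det := by
          intro σ
          rcases Int.units_eq_one_or (Equiv.Perm.sign σ) with h | h <;> rw [h] <;> push_cast <;> ring
        rw [Finset.sum_congr rfl fun σ _ => hsq σ, Finset.sum_const, Finset.card_univ,
          Fintype.card_perm, Fintype.card_fin, nsmul_eq_mul]

lemma aux_sum_det_sq {k n : ℕ} (M : Matrix (Fin n) (Fin n) ℝ) (t : Fin k → Fin n) :
    ∑ i : Fin k → Fin n, ((M.submatrix i t).det) ^ 2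
      = (k.factorial : ℝ) * ((Mᵀ * M).submatrix t t).det := by
  have h := aux_cb ((M.submatrix id t)ᵀ) (M.submatrix id t)
  have h1 : (M.submatrix id t)ᵀ * (M.submatrix id t) = (Mᵀ * M).submatrix t t := by
    ext r c; simp [Matrix.mul_apply, Matrix.transpose_apply]
  rw [h1] at h
  calc ∑ i : Fin k → Fin n, ((M.submatrix i t).det) ^ 2
      = ∑ i : Fin k → Fin n,
          (((M.submatrix id t)ᵀ).submatrix id i).det * ((M.submatrix id t).submatrix i id).det := by
        refine Finset.sum_congr rfl fun i _ => ?_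
        have h2 : ((M.submatrix id t)ᵀ).submatrix id i = (M.submatrix i t)ᵀ := by
          ext r c; rfl
        have h3 : (M.submatrix id t).submatrix i id = M.submatrix i t := by
          ext r c; rfl
        rw [h2, h3, Matrix.det_transpose, sq]
    _ = _ := h.symm

lemma aux_det_ite_le_one {k n : ℕ} (t : Fin k → Fin n) :
    (Matrix.of fun r c : Fin k => if t r = t c then (1:ℝ) else 0).det ≤ 1 := by
  by_cases ht : Function.Injective t
  · have : (Matrix.of fun r c : Fin k => if t r = t c then (1:ℝ) else 0) = 1 := by
      ext r c
      simp only [Matrix.of_apply, Matrix.one_apply]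
      by_cases h : r = c
      · simp [h]
      · have : t r ≠ t c := fun hh => h (ht hh)
        simp [h, this]
    rw [this, Matrix.det_one]
  · rw [Function.not_injective_iff] at ht
    obtain ⟨r, c, hrc, hne⟩ := ht
    have : (Matrix.of fun r c : Fin k => if t r = t c then (1:ℝ) else 0).det = 0 := by
      apply Matrix.det_zero_of_row_eq hne
      ext c'
      simp [hrc]
    rw [this]; norm_num

lemma aux_sum_abs_det_le {n k : ℕ} (a u v : Matrix (Fin n) (Fin n) ℝ) (s : Fin n → ℝ)
    (hs : ∀ j, 0 ≤ s j)
    (ha : a = u * Matrix.diagonal s * vᵀ)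
    (hu : uᵀ * u = Matrix.diagonal (fun j => if s j = 0 then 0 else 1))
    (hv : vᵀ * v = 1) :
    ∑ i : Fin k → Fin n, |(a.submatrix i i).det| ≤ (∑ j, s j) ^ k := by
  have kfacpos : (0:ℝ) < (k.factorial : ℝ) := by positivity
  have step1 : ∀ i : Fin k → Fin n, (a.submatrix i i).det
      = (k.factorial : ℝ)⁻¹ * ∑ t : Fin k → Fin n,
          (∏ r, s (t r)) * ((u.submatrix i t).det * (v.submatrix i t).det) := by
    intro i
    have hsm : a.submatrix i i = (u.submatrix i id) * ((Matrix.diagonal s * vᵀ).submatrix id i) := by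
      rw [ha, mul_assoc]
      exact Matrix.submatrix_mul u (Matrix.diagonal s * vᵀ) i id i Function.bijective_id
    have hcb := aux_cb (u.submatrix i id) ((Matrix.diagonal s * vᵀ).submatrix id i)
    have heq : ∀ t : Fin k → Fin n,
        ((u.submatrix i id).submatrix id t).det
          * (((Matrix.diagonal s * vᵀ).submatrix id i).submatrix t id).det
        = (∏ r, s (t r)) * ((u.submatrix i t).det * (v.submatrix i t).det) := by
      intro t
      have e1 : (u.submatrix i id).submatrix id t = u.submatrix i t := by ext r c; rfl
      have e2 : ((Matrix.diagonal s * vᵀ).submatrix id i).submatrix t id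
          = (Matrix.diagonal (fun r => s (t r))) * ((vᵀ).submatrix t i) := by
        ext r c
        simp [Matrix.mul_apply, Matrix.submatrix_apply, Matrix.diagonal_apply,
          Finset.sum_ite_eq, Matrix.transpose_apply]
      have e3 : ((vᵀ).submatrix t i) = (v.submatrix i t)ᵀ := by ext r c; rfl
      rw [e1, e2, Matrix.det_mul, Matrix.det_diagonal, e3, Matrix.det_transpose]
      ring
    rw [hsm, eq_inv_mul_iff_mul_eq₀ (ne_of_gt kfacpos)] at *
    rw [hcb]
    exact Finset.sum_congr rfl fun t _ => heq t
  have step2 : ∀ t : Fin k → Fin n, (∏ r, s (t r)) ≠ 0 →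
      ∑ i : Fin k → Fin n, |(u.submatrix i t).det * (v.submatrix i t).det|
        ≤ (k.factorial : ℝ) := by
    intro t ht
    have hsq_u : ∑ i : Fin k → Fin n, ((u.submatrix i t).det) ^ 2 ≤ (k.factorial : ℝ) := by
      rw [aux_sum_det_sq, hu]
      have : (Matrix.diagonal (fun j => if s j = 0 then (0:ℝ) else 1)).submatrix t t
          = Matrix.of fun r c : Fin k => if t r = t c then (1:ℝ) else 0 := by
        ext r c
        have hstc : s (t c) ≠ 0 := by
          intro h0
          exact ht (Finset.prod_eq_zero (Finset.mem_univ c) h0)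
        simp only [Matrix.submatrix_apply, Matrix.diagonal_apply, Matrix.of_apply]
        by_cases h : t r = t c <;> simp [h, hstc]
      rw [this]
      calc (k.factorial : ℝ) * (Matrix.of fun r c : Fin k => if t r = t c then (1:ℝ) else 0).det
          ≤ (k.factorial : ℝ) * 1 :=
            mul_le_mul_of_nonneg_left (aux_det_ite_le_one t) (le_of_lt kfacpos)
        _ = _ := mul_one _
    have hsq_v : ∑ i : Fin k → Fin n, ((v.submatrix i t).det) ^ 2 ≤ (k.factorial : ℝ) := by
      rw [aux_sum_det_sq, hv]
      have : (1 : Matrix (Fin n) (Fin n) ℝ).submatrix t t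
          = Matrix.of fun r c : Fin k => if t r = t c then (1:ℝ) else 0 := by
        ext r c
        simp [Matrix.submatrix_apply, Matrix.one_apply]
      rw [this]
      calc (k.factorial : ℝ) * (Matrix.of fun r c : Fin k => if t r = t c then (1:ℝ) else 0).det
          ≤ (k.factorial : ℝ) * 1 :=
            mul_le_mul_of_nonneg_left (aux_det_ite_le_one t) (le_of_lt kfacpos)
        _ = _ := mul_one _
    have cs := Finset.sum_mul_sq_le_sq_mul_sq Finset.univ
      (fun i : Fin k → Fin n => |(u.submatrix i t).det|)
      (fun i : Fin k → Fin n => |(v.submatrix i t).det|)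
    have habs : ∀ i : Fin k → Fin n,
        |(u.submatrix i t).det * (v.submatrix i t).det|
          = |(u.submatrix i t).det| * |(v.submatrix i t).det| := fun i => abs_mul _ _
    have hsqabs_u : ∑ i : Fin k → Fin n, |(u.submatrix i t).det| ^ 2
        = ∑ i : Fin k → Fin n, ((u.submatrix i t).det) ^ 2 :=
      Finset.sum_congr rfl fun i _ => sq_abs _
    have hsqabs_v : ∑ i : Fin k → Fin n, |(v.submatrix i t).det| ^ 2
        = ∑ i : Fin k → Fin n, ((v.submatrix i t).det) ^ 2 :=
      Finset.sum_congr rfl fun i _ => sq_abs _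
    rw [hsqabs_u, hsqabs_v] at cs
    calc ∑ i : Fin k → Fin n, |(u.submatrix i t).det * (v.submatrix i t).det|
        = ∑ i : Fin k → Fin n, |(u.submatrix i t).det| * |(v.submatrix i t).det| :=
          Finset.sum_congr rfl fun i _ => habs i
      _ ≤ (k.factorial : ℝ) := by
          nlinarith [sq_nonneg (∑ i : Fin k → Fin n,
              |(u.submatrix i t).det| * |(v.submatrix i t).det|),
            Finset.sum_nonneg (fun i (_ : i ∈ Finset.univ) =>
              sq_nonneg ((u.submatrix i t).det)),
            Finset.sum_nonneg (fun i (_ : i ∈ Finset.univ) =>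
              sq_nonneg ((v.submatrix i t).det))]
  calc ∑ i : Fin k → Fin n, |(a.submatrix i i).det|
      ≤ ∑ i : Fin k → Fin n, (k.factorial : ℝ)⁻¹ * ∑ t : Fin k → Fin n,
          (∏ r, s (t r)) * |(u.submatrix i t).det * (v.submatrix i t).det| := by
        refine Finset.sum_le_sum fun i _ => ?_
        rw [step1 i, abs_mul, abs_inv, Nat.abs_cast]
        refine mul_le_mul_of_nonneg_left ?_ (by positivity)
        refine (Finset.abs_sum_le_sum_abs _ _).trans ?_
        refine Finset.sum_le_sum fun t _ => ?_
        rw [abs_mul]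
        refine mul_le_mul_of_nonneg_right ?_ (abs_nonneg _)
        rw [abs_of_nonneg (Finset.prod_nonneg fun r _ => hs (t r))]
    _ = (k.factorial : ℝ)⁻¹ * ∑ t : Fin k → Fin n, (∏ r, s (t r)) *
          ∑ i : Fin k → Fin n, |(u.submatrix i t).det * (v.submatrix i t).det| := by
        rw [← Finset.mul_sum, Finset.sum_comm]
        congr 1
        exact Finset.sum_congr rfl fun t _ => (Finset.mul_sum _ _ _).symm
    _ ≤ (k.factorial : ℝ)⁻¹ * ∑ t : Fin k → Fin n, (∏ r, s (t r)) * (k.factorial : ℝ) := by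
        refine mul_le_mul_of_nonneg_left (Finset.sum_le_sum fun t _ => ?_) (by positivity)
        by_cases ht : (∏ r, s (t r)) = 0
        · simp [ht]
        · exact mul_le_mul_of_nonneg_left (step2 t ht)
            (Finset.prod_nonneg fun r _ => hs (t r))
    _ = ∑ t : Fin k → Fin n, (∏ r, s (t r)) := by
        rw [← Finset.sum_mul]
        field_simp
    _ = (∑ j, s j) ^ k := (Fintype.sum_pow s k).symm

lemma aux_exists_svd {n : ℕ} (a : Matrix (Fin n) (Fin n) ℝ) :
    ∃ (s : Fin n → ℝ) (u v : Matrix (Fin n) (Fin n) ℝ),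
      (∀ j, 0 ≤ s j) ∧ a = u * Matrix.diagonal s * vᵀ ∧
      uᵀ * u = Matrix.diagonal (fun j => if s j = 0 then 0 else 1) ∧
      vᵀ * v = 1 := by
  have hpsd : (aᵀ * a).PosSemidef := by
    have := Matrix.posSemidef_conjTranspose_mul_self a
    simpa using this
  have hg : (aᵀ * a).IsHermitian := hpsd.1
  set w : Matrix (Fin n) (Fin n) ℝ := (hg.eigenvectorUnitary : Matrix (Fin n) (Fin n) ℝ) with hw
  set lam : Fin n → ℝ := hg.eigenvalues with hlam
  have hlam_nn : ∀ j, 0 ≤ lam j := hpsd.eigenvalues_nonneg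
  have hspec : aᵀ * a = w * Matrix.diagonal lam * wᵀ := hg.spectral_theorem
  have hww' : w * wᵀ = 1 := (Matrix.mem_unitaryGroup_iff).mp hg.eigenvectorUnitary.2
  have hw'w : wᵀ * w = 1 := (Matrix.mem_unitaryGroup_iff').mp hg.eigenvectorUnitary.2
  set s : Fin n → ℝ := fun j => Real.sqrt (lam j) with hs_def
  have hs_nn : ∀ j, 0 ≤ s j := fun j => Real.sqrt_nonneg _
  have hs_sq : ∀ j, s j ^ 2 = lam j := fun j => Real.sq_sqrt (hlam_nn j)
  set d : Fin n → ℝ := fun j => if s j = 0 then 0 else (s j)⁻¹ with hd_def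
  set u : Matrix (Fin n) (Fin n) ℝ := a * w * Matrix.diagonal d with hu_def
  have hgram : (a * w)ᵀ * (a * w) = Matrix.diagonal lam := by
    calc (a * w)ᵀ * (a * w) = wᵀ * (aᵀ * a) * w := by
          rw [Matrix.transpose_mul]; noncomm_ring
      _ = wᵀ * w * Matrix.diagonal lam * (wᵀ * w) := by rw [hspec]; noncomm_ring
      _ = Matrix.diagonal lam := by rw [hw'w, one_mul, mul_one]
  have keydiag : ∀ (X : Matrix (Fin n) (Fin n) ℝ) (j : Fin n),
      (Xᵀ * X) j j = ∑ m', (X m' j) ^ 2 := by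
    intro X j
    simp [Matrix.mul_apply, Matrix.transpose_apply, sq]
  have hzero : ∀ j, s j = 0 → ∀ m, (a * w) m j = 0 := by
    intro j hsj m
    have hlamj : lam j = 0 := by
      have := hs_sq j; rw [hsj] at this; simpa using this.symm
    have hsum : ∑ m', ((a * w) m' j) ^ 2 = 0 := by
      rw [← keydiag (a * w) j, hgram, Matrix.diagonal_apply_eq, hlamj]
    have := (Finset.sum_eq_zero_iff_of_nonneg
      (fun m' (_ : m' ∈ Finset.univ) => sq_nonneg ((a * w) m' j))).mp hsum m (Finset.mem_univ m)
    exact pow_eq_zero_iff (n := 2) (by norm_num) |>.mp this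
  refine ⟨s, u, w, hs_nn, ?_, ?_, hw'w⟩
  · have h1 : u * Matrix.diagonal s = a * w := by
      rw [hu_def, mul_assoc, Matrix.diagonal_mul_diagonal]
      ext m j
      rw [Matrix.mul_diagonal]
      by_cases hsj : s j = 0
      · rw [hzero j hsj m]; ring
      · have : d j * s j = 1 := by
          rw [hd_def]; simp only [if_neg hsj]; exact inv_mul_cancel₀ hsj
        rw [this, mul_one]
    calc a = a * w * wᵀ := by rw [mul_assoc, hww', mul_one]
      _ = u * Matrix.diagonal s * wᵀ := by rw [h1]
  · have hut : uᵀ = Matrix.diagonal d * (a * w)ᵀ := by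
      rw [hu_def, Matrix.transpose_mul, Matrix.diagonal_transpose]
    rw [hut, hu_def]
    calc Matrix.diagonal d * (a * w)ᵀ * (a * w * Matrix.diagonal d)
        = Matrix.diagonal d * ((a * w)ᵀ * (a * w)) * Matrix.diagonal d := by noncomm_ring
      _ = Matrix.diagonal d * Matrix.diagonal lam * Matrix.diagonal d := by rw [hgram]
      _ = Matrix.diagonal (fun j => d j * lam j * d j) := by
          rw [Matrix.diagonal_mul_diagonal, Matrix.diagonal_mul_diagonal]
      _ = Matrix.diagonal (fun j => if s j = 0 then 0 else 1) := by
          refine congrArg Matrix.diagonal (funext fun j => ?_)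
          by_cases hsj : s j = 0
          · simp [hd_def, hsj]
          · have hl : lam j = s j ^ 2 := (hs_sq j).symm
            rw [hd_def]
            simp only [if_neg hsj]
            rw [hl]
            field_simp

end Aux


section Aux2
open Matrix

variable {ι H : Type*} [NormedAddCommGroup H] [InnerProductSpace ℝ H] [CompleteSpace H]

lemma aux_traceNorm_nonneg (A : H →L[ℝ] H) (hA : IsTraceClass A) : 0 ≤ traceNorm A := by
  have h0 : (0:ℝ) ∈ traceSet A := by
    refine ⟨0, Fin.elim0, Fin.elim0, ?_, ?_, by simp⟩ <;>
      exact orthonormal_iff_ite.mpr (fun i => i.elim0)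
  exact le_csSup hA h0

lemma aux_sum_s_le (e : HilbertBasis ι ℝ H) (A : H →L[ℝ] H) (hA : IsTraceClass A)
    {n : ℕ} (φ : Fin n → ι) (hφ : Function.Injective φ)
    (s : Fin n → ℝ) (u v : Matrix (Fin n) (Fin n) ℝ) (hs : ∀ j, 0 ≤ s j)
    (ha : (Matrix.of fun m m' : Fin n => ⟪e (φ m), A (e (φ m'))⟫) = u * Matrix.diagonal s * vᵀ)
    (hu : uᵀ * u = Matrix.diagonal (fun j => if s j = 0 then 0 else 1))
    (hv : vᵀ * v = 1) :
    ∑ j, s j ≤ traceNorm A := by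
  set a : Matrix (Fin n) (Fin n) ℝ := Matrix.of fun m m' : Fin n => ⟪e (φ m), A (e (φ m'))⟫
    with ha_def
  have hdiag : uᵀ * a * v = Matrix.diagonal (fun j => if s j = 0 then 0 else s j) := by
    calc uᵀ * a * v = uᵀ * (u * Matrix.diagonal s * vᵀ) * v := by rw [← ha]
      _ = (uᵀ * u) * Matrix.diagonal s * (vᵀ * v) := by noncomm_ring
      _ = Matrix.diagonal (fun j => if s j = 0 then 0 else 1) * Matrix.diagonal s * 1 := by
          rw [hu, hv]
      _ = Matrix.diagonal (fun j => if s j = 0 then 0 else s j) := by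
          rw [mul_one, Matrix.diagonal_mul_diagonal]
          refine congrArg Matrix.diagonal (funext fun j => ?_)
          by_cases hsj : s j = 0 <;> simp [hsj]
  have hdiag' : ∀ j, (uᵀ * a * v) j j = s j := by
    intro j
    rw [hdiag, Matrix.diagonal_apply_eq]
    by_cases hsj : s j = 0 <;> simp [hsj]
  have hone : Orthonormal ℝ (fun m : Fin n => e (φ m)) := e.orthonormal.comp φ hφ
  have hgen : ∀ (M : Matrix (Fin n) (Fin n) ℝ) (cp cq : Fin n),
      ⟪∑ m', M m' cp • e (φ m'), ∑ m', M m' cq • e (φ m')⟫ = (Mᵀ * M) cp cq := by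
    intro M cp cq
    have h := hone.inner_sum (fun m' => M m' cp) (fun m' => M m' cq) Finset.univ
    simp only [starRingEnd_apply, star_trivial] at h
    rw [h]
    simp [Matrix.mul_apply, Matrix.transpose_apply]
  set T : Finset (Fin n) := Finset.univ.filter (fun j => s j ≠ 0) with hT
  set κ : Fin T.card ≃ {x // x ∈ T} := T.equivFin.symm with hκ
  have hmemT : ∀ p : Fin T.card, s (κ p : Fin n) ≠ 0 := by
    intro p
    exact (Finset.mem_filter.mp (κ p).2).2
  set f : Fin T.card → H := fun p => ∑ m', u m' (κ p : Fin n) • e (φ m') with hf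
  set g : Fin T.card → H := fun p => ∑ m', v m' (κ p : Fin n) • e (φ m') with hg
  have honf : Orthonormal ℝ f := by
    rw [orthonormal_iff_ite]
    intro p q
    rw [hf]
    simp only []
    rw [hgen u (κ p : Fin n) (κ q : Fin n), hu, Matrix.diagonal_apply]
    by_cases hpq : p = q
    · simp [hpq, hmemT q]
    · have : (κ p : Fin n) ≠ (κ q : Fin n) := by
        intro hh
        exact hpq (κ.injective (Subtype.ext hh))
      simp [hpq, this]
  have hong : Orthonormal ℝ g := by
    rw [orthonormal_iff_ite]
    intro p q
    rw [hg]
    simp only []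
    rw [hgen v (κ p : Fin n) (κ q : Fin n), hv]
    by_cases hpq : p = q
    · simp [hpq, Matrix.one_apply]
    · have : (κ p : Fin n) ≠ (κ q : Fin n) := by
        intro hh
        exact hpq (κ.injective (Subtype.ext hh))
      simp [hpq, Matrix.one_apply, this]
  have hfAg : ∀ p : Fin T.card, ⟪f p, A (g p)⟫ = s (κ p : Fin n) := by
    intro p
    have hAg : A (g p) = ∑ m', v m' (κ p : Fin n) • A (e (φ m')) := by
      rw [hg]
      simp [map_sum]
    rw [hf, hAg, sum_inner]
    simp only [real_inner_smul_left, inner_sum, real_inner_smul_right]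
    rw [← hdiag' (κ p : Fin n)]
    simp only [Matrix.mul_apply, Matrix.transpose_apply, ha_def, Matrix.of_apply,
      Finset.sum_mul, Finset.mul_sum]
    rw [Finset.sum_comm]
    refine Finset.sum_congr rfl fun m _ => Finset.sum_congr rfl fun m' _ => by ring
  have hmem : (∑ j, s j) ∈ traceSet A := by
    refine ⟨T.card, f, g, honf, hong, ?_⟩
    have h1 : ∀ p : Fin T.card, |⟪f p, A (g p)⟫| = s (κ p : Fin n) := by
      intro p
      rw [hfAg p]
      exact abs_of_nonneg (hs _)
    have h2 : ∑ p, |⟪f p, A (g p)⟫| = ∑ p : Fin T.card, s (κ p : Fin n) :=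
      Finset.sum_congr rfl fun p _ => h1 p
    have h3 : ∑ p : Fin T.card, s (κ p : Fin n) = ∑ x : {x // x ∈ T}, s (x : Fin n) :=
      Fintype.sum_equiv κ _ _ (fun p => rfl)
    have h4 : ∑ x : {x // x ∈ T}, s (x : Fin n) = ∑ j ∈ T, s j :=
      Finset.sum_coe_sort T s
    have h5 : ∑ j ∈ T, s j = ∑ j, s j := by
      rw [hT]
      exact Finset.sum_filter_of_ne (fun j _ hj => hj)
    rw [h2, h3, h4, h5]
  exact le_csSup hA hmem

end Aux2

section Aux3
open Matrix

variable {ι H : Type*} [NormedAddCommGroup H] [InnerProductSpace ℝ H] [CompleteSpace H]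

lemma aux_abs_tsum_le {β : Type*} (g : β → ℝ) (c : ℝ) (hc : 0 ≤ c)
    (h : ∀ S : Finset β, |∑ i ∈ S, g i| ≤ c) : |∑' i, g i| ≤ c := by
  by_cases hs : Summable g
  · have ht : Filter.Tendsto (fun S : Finset β => ∑ i ∈ S, g i) Filter.atTop
        (nhds (∑' i, g i)) := hs.hasSum
    exact le_of_tendsto ht.abs (Filter.Eventually.of_forall h)
  · rw [tsum_eq_zero_of_not_summable hs]
    simpa using hc

lemma aux_finite_bound (e : HilbertBasis ι ℝ H) (A : H →L[ℝ] H) (hA : IsTraceClass A)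
    (k : ℕ) (S : Finset (Fin k → ι)) :
    |∑ i ∈ S, (Matrix.of fun a b : Fin k => ⟪e (i a), A (e (i b))⟫).det|
      ≤ (traceNorm A) ^ k := by
  classical
  set F : Finset ι := S.biUnion (fun i => Finset.image i Finset.univ) with hF
  set κ : {x // x ∈ F} ≃ Fin F.card := F.equivFin with hκ
  set φ : Fin F.card → ι := fun m => (κ.symm m : ι) with hφdef
  have hφ : Function.Injective φ := fun p q h =>
    κ.symm.injective (Subtype.ext h)
  set am : Matrix (Fin F.card) (Fin F.card) ℝ :=
    Matrix.of fun m m' => ⟪e (φ m), A (e (φ m'))⟫ with ham_def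
  obtain ⟨s, u, v, hs, ha, hu, hv⟩ := aux_exists_svd am
  have hsum_s : ∑ j, s j ≤ traceNorm A := aux_sum_s_le e A hA φ hφ s u v hs ha hu hv
  have hmain : ∑ i : Fin k → Fin F.card, |(am.submatrix i i).det| ≤ (∑ j, s j) ^ k :=
    aux_sum_abs_det_le am u v s hs ha hu hv
  have hs_nn : (0:ℝ) ≤ ∑ j, s j := Finset.sum_nonneg fun j _ => hs j
  have hmem : ∀ i ∈ S, ∀ r, i r ∈ F := fun i hi r =>
    Finset.mem_biUnion.mpr ⟨i, hi, Finset.mem_image_of_mem i (Finset.mem_univ r)⟩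
  set ψ : {x // x ∈ S} → (Fin k → Fin F.card) :=
    fun x r => κ ⟨x.1 r, hmem x.1 x.2 r⟩ with hψdef
  have hφψ : ∀ (x : {x // x ∈ S}) (r : Fin k), φ (ψ x r) = x.1 r := by
    intro x r
    rw [hφdef, hψdef]
    simp [Equiv.symm_apply_apply]
  have hψdet : ∀ x : {x // x ∈ S},
      (Matrix.of fun a b : Fin k => ⟪e (x.1 a), A (e (x.1 b))⟫)
        = am.submatrix (ψ x) (ψ x) := by
    intro x
    ext r c
    simp only [Matrix.of_apply, Matrix.submatrix_apply, ham_def]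
    rw [hφψ x r, hφψ x c]
  have hψinj : Function.Injective ψ := by
    intro x y hxy
    apply Subtype.ext
    funext r
    have h1 := congrFun hxy r
    have h2 := congrArg (fun z => (κ.symm z : ι)) h1
    simp only [hψdef] at h2
    simpa [Equiv.symm_apply_apply] using h2
  calc |∑ i ∈ S, (Matrix.of fun a b : Fin k => ⟪e (i a), A (e (i b))⟫).det|
      ≤ ∑ i ∈ S, |(Matrix.of fun a b : Fin k => ⟪e (i a), A (e (i b))⟫).det| :=
        Finset.abs_sum_le_sum_abs _ _
    _ = ∑ x ∈ S.attach, |(am.submatrix (ψ x) (ψ x)).det| := by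
        rw [← Finset.sum_attach S
          (fun i => |(Matrix.of fun a b : Fin k => ⟪e (i a), A (e (i b))⟫).det|)]
        exact Finset.sum_congr rfl fun x _ => by rw [hψdet x]
    _ ≤ ∑ i : Fin k → Fin F.card, |(am.submatrix i i).det| := by
        have himg := Finset.sum_image
          (f := fun t : Fin k → Fin F.card => |(am.submatrix t t).det|) (g := ψ)
          (s := S.attach) (fun x _ y _ h => hψinj h)
        rw [← himg]
        exact Finset.sum_le_sum_of_subset_of_nonneg (Finset.subset_univ _)
          (fun i _ _ => abs_nonneg _)
    _ ≤ (∑ j, s j) ^ k := hmain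
    _ ≤ (traceNorm A) ^ k := pow_le_pow_left₀ hs_nn hsum_s k

end Aux3

/-- For a trace class operator `A`: each exterior power has trace bounded by
`‖A‖_tr^k / k!`, and consequently `z ↦ Σ_k z^k tr(ΛᵏA)` defines an entire function
with `|det_Fr(1 + zA)| ≤ exp(|z| ‖A‖_tr)`. -/
theorem stmt11 {ι H : Type*} [NormedAddCommGroup H] [InnerProductSpace ℝ H]
    [CompleteSpace H] (e : HilbertBasis ι ℝ H) (A : H →L[ℝ] H)
    (hA : IsTraceClass A) :
    (∀ k : ℕ, |trLambda e A k| ≤ traceNorm A ^ k / (k.factorial : ℝ)) ∧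
    AnalyticOn ℂ (fun z : ℂ => ∑' k : ℕ, z ^ k * (trLambda e A k : ℂ)) Set.univ ∧
    (∀ z : ℂ, ‖∑' k : ℕ, z ^ k * (trLambda e A k : ℂ)‖ ≤
      Real.exp (‖z‖ * traceNorm A)) := by
  have ρnn : 0 ≤ traceNorm A := aux_traceNorm_nonneg A hA
  have hbound : ∀ k : ℕ, |trLambda e A k| ≤ traceNorm A ^ k / (k.factorial : ℝ) := by
    intro k
    unfold trLambda
    rw [abs_mul, abs_inv, Nat.abs_cast, div_eq_inv_mul]
    refine mul_le_mul_of_nonneg_left ?_ (by positivity)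
    exact aux_abs_tsum_le _ _ (pow_nonneg ρnn k) (aux_finite_bound e A hA k)
  set c : ℕ → ℝ := trLambda e A with hc
  set p : FormalMultilinearSeries ℂ ℂ ℂ :=
    FormalMultilinearSeries.ofScalars ℂ (fun k => (c k : ℂ)) with hp
  have hpnorm : ∀ k, ‖p k‖ ≤ traceNorm A ^ k / (k.factorial : ℝ) := by
    intro k
    rw [hp]
    calc ‖FormalMultilinearSeries.ofScalars ℂ (fun k => (c k : ℂ)) k‖
        = |c k| := by
          rw [FormalMultilinearSeries.ofScalars_norm, Complex.norm_real, Real.norm_eq_abs]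
      _ ≤ traceNorm A ^ k / (k.factorial : ℝ) := hbound k
  have hsummable : ∀ r : NNReal, Summable fun k => ‖p k‖ * (r:ℝ) ^ k := by
    intro r
    refine Summable.of_nonneg_of_le (fun k => by positivity) (fun k => ?_)
      (Real.summable_pow_div_factorial (traceNorm A * (r:ℝ)))
    calc ‖p k‖ * (r:ℝ) ^ k
        ≤ (traceNorm A ^ k / (k.factorial : ℝ)) * (r:ℝ) ^ k :=
          mul_le_mul_of_nonneg_right (hpnorm k) (pow_nonneg r.2 k)
      _ = (traceNorm A * (r:ℝ)) ^ k / (k.factorial : ℝ) := by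
          rw [mul_pow]; ring
  have hrad : p.radius = ⊤ := p.radius_eq_top_of_summable_norm hsummable
  have hball : HasFPowerSeriesOnBall p.sum p 0 ⊤ := by
    have := p.hasFPowerSeriesOnBall (by rw [hrad]; exact ENNReal.zero_lt_top)
    rwa [hrad] at this
  have hfeq : (fun z : ℂ => ∑' k : ℕ, z ^ k * (c k : ℂ)) = p.sum := by
    funext z
    have hz : p.sum z = ∑' k, p k (fun _ => z) := rfl
    rw [hz]
    refine tsum_congr fun k => ?_
    rw [hp, FormalMultilinearSeries.ofScalars_apply_eq, smul_eq_mul]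
    ring
  refine ⟨hbound, ?_, ?_⟩
  · rw [hfeq]
    have h1 := hball.analyticOnNhd
    rw [show Metric.eball (0:ℂ) ⊤ = Set.univ from by simp] at h1
    exact h1.analyticOn
  · intro z
    have hterm : ∀ k : ℕ, ‖z ^ k * (c k : ℂ)‖ ≤ (‖z‖ * traceNorm A) ^ k / (k.factorial : ℝ) := by
      intro k
      calc ‖z ^ k * (c k : ℂ)‖ = ‖z‖ ^ k * |c k| := by
            rw [norm_mul, norm_pow, Complex.norm_real, Real.norm_eq_abs]
        _ ≤ ‖z‖ ^ k * (traceNorm A ^ k / (k.factorial : ℝ)) :=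
            mul_le_mul_of_nonneg_left (hbound k) (pow_nonneg (norm_nonneg z) k)
        _ = (‖z‖ * traceNorm A) ^ k / (k.factorial : ℝ) := by
            rw [mul_pow]; ring
    have hsumm : Summable (fun k : ℕ => ‖z ^ k * (c k : ℂ)‖) :=
      Summable.of_nonneg_of_le (fun k => norm_nonneg _) hterm
        (Real.summable_pow_div_factorial (‖z‖ * traceNorm A))
    calc ‖∑' k : ℕ, z ^ k * (c k : ℂ)‖ ≤ ∑' k : ℕ, ‖z ^ k * (c k : ℂ)‖ :=
          norm_tsum_le_tsum_norm hsumm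
      _ ≤ ∑' k : ℕ, (‖z‖ * traceNorm A) ^ k / (k.factorial : ℝ) :=
          Summable.tsum_le_tsum hterm hsumm (Real.summable_pow_div_factorial (‖z‖ * traceNorm A))
      _ = Real.exp (‖z‖ * traceNorm A) := by
          rw [Real.exp_eq_exp_ℝ, NormedSpace.exp_eq_tsum_div]
end

section
/- Shift of a Gaussian measure by resolvent identity: if C_D and C_N denote the resolvents (Δ_{Ω,D}+m²)^{−1} and (Δ_{Ω,N}+m²)^{−1} of the Laplacian on a compact Riemannian manifold Ω with boundary, with Dirichlet and Neumann conditions respectively, then PI·(DN)^{−1}·PI* = C_N − C_D as operators on compactly supported smooth functions, where PI is the Poisson integral operator from ∂Ω and DN the Dirichlet-to-Neumann operator; consequently C_N ≥ C_D as quadratic forms. -/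
open scoped RealInnerProductSpace

/-- Abstract form of the resolvent identity `PI ∘ DN⁻¹ ∘ PI* = C_N − C_D` and the
resulting comparison `C_N ≥ C_D`.  Here `V` plays the role of functions on a compact
Riemannian manifold `Ω` with boundary, `B` of functions on `∂Ω`; `L = Δ + m²`,
`τ` the boundary trace, `dν` the outward normal derivative at the boundary, `C_D`
and `C_N` the Dirichlet and Neumann resolvents, `PI` the Poisson integral operator,
`DN` the Dirichlet-to-Neumann operator with inverse `DNinv`, and
`PI* = −∂_ν ∘ C_D` its adjoint (Green's formula `⟨f, PI φ⟩ = ⟨PI* f, φ⟩`).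
Positivity of `DN⁻¹` (equivalently of `DN`) yields `⟨f, (C_N − C_D) f⟩ ≥ 0`. -/
theorem stmt18 {V B : Type*} [NormedAddCommGroup V] [InnerProductSpace ℝ V]
    [NormedAddCommGroup B] [InnerProductSpace ℝ B]
    (L : V →ₗ[ℝ] V) (τ dν : V →ₗ[ℝ] B)
    (CD CN : V →ₗ[ℝ] V) (PI : B →ₗ[ℝ] V) (DN DNinv : B →ₗ[ℝ] B)
    (PIstar : V →ₗ[ℝ] B)
    (hCD : ∀ f : V, L (CD f) = f ∧ τ (CD f) = 0)
    (hCN : ∀ f : V, L (CN f) = f ∧ dν (CN f) = 0)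
    (hPI : ∀ φ : B, L (PI φ) = 0 ∧ τ (PI φ) = φ)
    (hDN : ∀ φ : B, DN φ = dν (PI φ))
    (hDNinv : ∀ φ : B, DN (DNinv φ) = φ)
    (hPIstar : ∀ f : V, PIstar f = -(dν (CD f)))
    (huniq : ∀ u v : V, L u = L v → dν u = dν v → u = v)
    (hadj : ∀ (f : V) (φ : B), ⟪f, PI φ⟫ = ⟪PIstar f, φ⟫)
    (hDNinvpos : ∀ φ : B, 0 ≤ ⟪φ, DNinv φ⟫) :
    (∀ f : V, PI (DNinv (PIstar f)) = CN f - CD f) ∧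
    (∀ f : V, 0 ≤ ⟪f, CN f - CD f⟫) := by
  have key : ∀ f : V, PI (DNinv (PIstar f)) = CN f - CD f := by
    intro f
    have h1 : CD f + PI (DNinv (PIstar f)) = CN f := by
      apply huniq
      · rw [map_add, (hCD f).1, (hPI (DNinv (PIstar f))).1, (hCN f).1, add_zero]
      · rw [map_add, ← hDN, hDNinv, hPIstar, (hCN f).2, add_neg_cancel]
    linear_combination (norm := module) h1
  refine ⟨key, fun f => ?_⟩
  rw [← key f, hadj]
  exact hDNinvpos _
end
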